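/- Every connected bipartite graph that contains no induced subgraph isomorphic to K_{1,3}^+ is either a path, a cycle, or an almost complete bipartite graph (a graph obtained from a complete bipartite graph by removing a set of edges forming a matching). -/

import Mathlib

open SimpleGraph

/-- `S` is an independent set of `G`. -/
def IsIS {V : Type*} (G : SimpleGraph V) (S : Set V) : Prop :=
  S.Pairwise fun u v => ¬ G.Adj u v

/-- `G` contains no induced subgraph isomorphic to `H`. -/
def HFree {W V : Type*} (H : SimpleGraph W) (G : SimpleGraph V) : Prop :=
  IsEmpty (H ↪g G)

/-- `G` is bipartite: the vertex set splits into two independent sets. -/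
def IsBip {V : Type*} (G : SimpleGraph V) : Prop :=
  ∃ X : Set V, IsIS G X ∧ IsIS G Xᶜ

/-- `S` is a vertex cover of `G`. -/
def IsVC {V : Type*} (G : SimpleGraph V) (S : Finset V) : Prop :=
  ∀ ⦃u v⦄, G.Adj u v → u ∈ S ∨ v ∈ S

/-- minimum size of a vertex cover. -/
noncomputable def vc {V : Type*} (G : SimpleGraph V) : ℕ :=
  sInf {n | ∃ S : Finset V, IsVC G S ∧ S.card = n}

/-- minimum size of an independent vertex cover. -/
noncomputable def ivc {V : Type*} (G : SimpleGraph V) : ℕ :=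
  sInf {n | ∃ S : Finset V, IsVC G S ∧ IsIS G ↑S ∧ S.card = n}

/-- `K_{1,3}^+`: the claw with one edge subdivided (5 vertices).
`Sum.inl 0` is the centre, `Sum.inl 1` the subdivision vertex, `Sum.inl 2` the
far endpoint, and `Sum.inr i` (`i : Fin 2`) the two remaining leaves. -/
def clawSubdiv : SimpleGraph (Fin 3 ⊕ Fin 2) :=
  SimpleGraph.fromRel fun u v =>
    (u = Sum.inl 0 ∧ v = Sum.inl 1) ∨ (u = Sum.inl 1 ∧ v = Sum.inl 2) ∨
      (∃ i : Fin 2, u = Sum.inl 0 ∧ v = Sum.inr i)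

/-- `G` is an almost complete bipartite graph: it has a bipartition `(X, Xᶜ)`
such that every vertex has at most one non-neighbour on the other side
(so the missing edges form a matching of a complete bipartite graph). -/
def IsAlmostCompleteBip {V : Type*} (G : SimpleGraph V) : Prop :=
  ∃ X : Set V, IsIS G X ∧ IsIS G Xᶜ ∧
    (∀ x ∈ X, {y ∈ Xᶜ | ¬ G.Adj x y}.Subsingleton) ∧
    (∀ y ∈ Xᶜ, {x ∈ X | ¬ G.Adj y x}.Subsingleton)

set_option linter.unusedSectionVars false

lemma chair_apply {V : Type*} {G : SimpleGraph V} (hfree : HFree clawSubdiv G)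
    {c m e l1 l2 : V}
    (hcm : G.Adj c m) (hme : G.Adj m e) (hcl1 : G.Adj c l1) (hcl2 : G.Adj c l2)
    (hce : ¬ G.Adj c e) (hml1 : ¬ G.Adj m l1) (hml2 : ¬ G.Adj m l2)
    (hel1 : ¬ G.Adj e l1) (hel2 : ¬ G.Adj e l2) (hl12 : ¬ G.Adj l1 l2)
    (nce : c ≠ e) (nml1 : m ≠ l1) (nml2 : m ≠ l2) (nel1 : e ≠ l1) (nel2 : e ≠ l2)
    (nl12 : l1 ≠ l2) : False := by
  have ncm : c ≠ m := hcm.ne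
  have nme : m ≠ e := hme.ne
  have ncl1 : c ≠ l1 := hcl1.ne
  have ncl2 : c ≠ l2 := hcl2.ne
  have hcm' := hcm.symm
  have hme' := hme.symm
  have hcl1' := hcl1.symm
  have hcl2' := hcl2.symm
  have hce' : ¬ G.Adj e c := fun h => hce h.symm
  have hml1' : ¬ G.Adj l1 m := fun h => hml1 h.symm
  have hml2' : ¬ G.Adj l2 m := fun h => hml2 h.symm
  have hel1' : ¬ G.Adj l1 e := fun h => hel1 h.symm
  have hel2' : ¬ G.Adj l2 e := fun h => hel2 h.symm
  have hl12' : ¬ G.Adj l2 l1 := fun h => hl12 h.symm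
  apply hfree.false
  refine ⟨⟨fun x => match x with
    | .inl 0 => c | .inl 1 => m | .inl 2 => e | .inr 0 => l1 | .inr 1 => l2, ?_⟩, ?_⟩
  · rintro (a|a) (b|b) hab <;> fin_cases a <;> fin_cases b <;> simp_all
  · rintro (a|a) (b|b) <;> fin_cases a <;> fin_cases b <;>
      simp only [clawSubdiv, fromRel_adj] <;>
      constructor <;> intro h <;>
      first
        | exact absurd rfl (G.ne_of_adj h)
        | (exfalso; revert h; decide)
        | assumption
        | exact absurd h ‹_›
        | simp_all

section PartB

variable {V : Type*} {G : SimpleGraph V} {X : Set V}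

lemma not_adj_of_mem (hS : IsIS G X) {x y : V} (hx : x ∈ X) (hy : y ∈ X) :
    ¬ G.Adj x y := fun h => hS hx hy h.ne h

lemma mem_compl_of_adj (hX : IsIS G X) {x y : V} (hx : x ∈ X) (h : G.Adj x y) :
    y ∈ Xᶜ := fun hy => not_adj_of_mem hX hx hy h

lemma mem_of_adj_compl (hXc : IsIS G Xᶜ) {x y : V} (hx : x ∈ Xᶜ) (h : G.Adj x y) :
    y ∈ X := by
  by_contra hy
  exact not_adj_of_mem hXc hx hy h

lemma ne_of_sides {x y : V} (hx : x ∈ X) (hy : y ∈ Xᶜ) : x ≠ y :=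
  fun h => hy (h ▸ hx)

/-- L1: a vertex `u` on the same side as `w`, sharing a neighbour `a` with `w`,
misses at most one neighbour of `w`. -/
lemma L1 (hX : IsIS G X) (hXc : IsIS G Xᶜ) (hfree : HFree clawSubdiv G)
    {w u a b c : V} (hw : w ∈ X) (hu : u ∈ X) (hne : u ≠ w)
    (hwa : G.Adj w a) (hua : G.Adj u a) (hwb : G.Adj w b) (hwc : G.Adj w c)
    (hub : ¬ G.Adj u b) (huc : ¬ G.Adj u c) : b = c := by
  by_contra hbc
  have haY : a ∈ Xᶜ := mem_compl_of_adj hX hw hwa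
  have hbY : b ∈ Xᶜ := mem_compl_of_adj hX hw hwb
  have hcY : c ∈ Xᶜ := mem_compl_of_adj hX hw hwc
  have hab : a ≠ b := fun h => hub (h ▸ hua)
  have hac : a ≠ c := fun h => huc (h ▸ hua)
  exact chair_apply hfree (c := w) (m := a) (e := u) (l1 := b) (l2 := c)
    hwa hua.symm hwb hwc
    (not_adj_of_mem hX hw hu) (not_adj_of_mem hXc haY hbY) (not_adj_of_mem hXc haY hcY)
    hub huc (not_adj_of_mem hXc hbY hcY)
    hne.symm hab hac (ne_of_sides hu hbY) (ne_of_sides hu hcY) hbc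

variable [Fintype V] [DecidableEq V] [DecidableRel G.Adj]

/-- the set of neighbours of `v` missed by `u` has at most one element. -/
lemma miss_card_le_one (hX : IsIS G X) (hXc : IsIS G Xᶜ) (hfree : HFree clawSubdiv G)
    {v u a : V} (hv : v ∈ X) (hu : u ∈ X) (hne : u ≠ v)
    (hva : G.Adj v a) (hua : G.Adj u a) :
    ((G.neighborFinset v).filter (fun t => ¬ G.Adj u t)).card ≤ 1 := by
  rw [Finset.card_le_one]
  intro b hb c hc
  simp only [Finset.mem_filter, mem_neighborFinset] at hb hc
  exact L1 hX hXc hfree hv hu hne hva hua hb.1 hc.1 hb.2 hc.2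

lemma common3 (hX : IsIS G X) (hXc : IsIS G Xᶜ) (hfree : HFree clawSubdiv G)
    {v u u' a a' : V} (hv : v ∈ X) (hu : u ∈ X) (hu' : u' ∈ X)
    (hne : u ≠ v) (hne' : u' ≠ v)
    (hva : G.Adj v a) (hua : G.Adj u a) (hva' : G.Adj v a') (hu'a' : G.Adj u' a')
    (hdeg : 3 ≤ (G.neighborFinset v).card) :
    ∃ t, G.Adj v t ∧ G.Adj u t ∧ G.Adj u' t := by
  set N := G.neighborFinset v with hN
  set B := N.filter (fun t => ¬ G.Adj u t)
  set B' := N.filter (fun t => ¬ G.Adj u' t)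
  have hB : B.card ≤ 1 := miss_card_le_one hX hXc hfree hv hu hne hva hua
  have hB' : B'.card ≤ 1 := miss_card_le_one hX hXc hfree hv hu' hne' hva' hu'a'
  have hsub : B ∪ B' ⊆ N := Finset.union_subset (Finset.filter_subset _ _) (Finset.filter_subset _ _)
  have hcard : (N \ (B ∪ B')).card ≠ 0 := by
    rw [Finset.card_sdiff_of_subset hsub]
    have := Finset.card_union_le B B'
    omega
  obtain ⟨t, ht⟩ := Finset.card_ne_zero.mp hcard
  rw [Finset.mem_sdiff, Finset.mem_union] at ht
  obtain ⟨htN, htB⟩ := ht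
  push_neg at htB
  have hvt : G.Adj v t := (mem_neighborFinset _ _ _).mp htN
  refine ⟨t, hvt, ?_, ?_⟩
  · by_contra h
    exact htB.1 (Finset.mem_filter.mpr ⟨htN, h⟩)
  · by_contra h
    exact htB.2 (Finset.mem_filter.mpr ⟨htN, h⟩)

lemma common2 (hX : IsIS G X) (hXc : IsIS G Xᶜ) (hfree : HFree clawSubdiv G)
    {v u a : V} (hv : v ∈ X) (hu : u ∈ X) (hne : u ≠ v)
    (hva : G.Adj v a) (hua : G.Adj u a)
    (hdeg : 3 ≤ (G.neighborFinset v).card) :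
    ∃ p q, p ≠ q ∧ G.Adj v p ∧ G.Adj v q ∧ G.Adj u p ∧ G.Adj u q := by
  set N := G.neighborFinset v with hN
  set B := N.filter (fun t => ¬ G.Adj u t)
  have hB : B.card ≤ 1 := miss_card_le_one hX hXc hfree hv hu hne hva hua
  have hsub : B ⊆ N := Finset.filter_subset _ _
  have hcard : 1 < (N \ B).card := by
    rw [Finset.card_sdiff_of_subset hsub]; omega
  obtain ⟨p, hp, q, hq, hpq⟩ := Finset.one_lt_card.mp hcard
  rw [Finset.mem_sdiff] at hp hq
  have hup : G.Adj u p := by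
    by_contra h; exact hp.2 (Finset.mem_filter.mpr ⟨hp.1, h⟩)
  have huq : G.Adj u q := by
    by_contra h; exact hq.2 (Finset.mem_filter.mpr ⟨hq.1, h⟩)
  exact ⟨p, q, hpq, (mem_neighborFinset _ _ _).mp hp.1, (mem_neighborFinset _ _ _).mp hq.1,
    hup, huq⟩

lemma crossing {S : Set V} {x y : V} (w : G.Walk x y) (hx : x ∈ S) (hy : y ∉ S) :
    ∃ p q, p ∈ S ∧ q ∉ S ∧ G.Adj p q := by
  induction w with
  | nil => exact absurd hx hy
  | @cons u t _ h q ih =>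
    by_cases ht : t ∈ S
    · exact ih ht hy
    · exact ⟨u, t, hx, ht, h⟩

/-- everything is within "distance 3" of a vertex of degree ≥ 3. -/
lemma reach (hX : IsIS G X) (hXc : IsIS G Xᶜ) (hconn : G.Connected)
    (hfree : HFree clawSubdiv G)
    {v : V} (hv : v ∈ X) (hdeg : 3 ≤ (G.neighborFinset v).card) (w : V) :
    w = v ∨ (∃ a, G.Adj v a ∧ G.Adj w a) ∨ G.Adj v w ∨
      (∃ u a, G.Adj v a ∧ G.Adj u a ∧ G.Adj u w) := by
  set R : Set V := {w | w = v ∨ (∃ a, G.Adj v a ∧ G.Adj w a) ∨ G.Adj v w ∨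
      (∃ u a, G.Adj v a ∧ G.Adj u a ∧ G.Adj u w)} with hR
  change w ∈ R
  by_contra hw
  obtain ⟨p, z, hpR, hzR, hadj⟩ := crossing ((hconn v w).some) (by left; rfl) hw
  apply hzR
  rcases hpR with rfl | ⟨a, hva, hpa⟩ | hvp | ⟨u, a, hva, hua, hup⟩
  · right; right; left; exact hadj
  · right; right; right; exact ⟨p, a, hva, hpa, hadj⟩
  · by_cases hzv : z = v
    · left; exact hzv
    · right; left; exact ⟨p, hvp, hadj.symm⟩
  · -- p is at distance 3 (or less) : p adjacent to u which shares a with v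
    by_cases hzv : z = v
    · left; exact hzv
    · by_cases hvy : G.Adj v p
      · right; left; exact ⟨p, hvy, hadj.symm⟩
      · -- v not adjacent to p
        have huv : u ≠ v := fun h => hvy (h ▸ hup)
        have huX : u ∈ X := mem_of_adj_compl hXc (mem_compl_of_adj hX hv hva) hua.symm
        have hpY : p ∈ Xᶜ := mem_compl_of_adj hX huX hup
        have hzX : z ∈ X := mem_of_adj_compl hXc hpY hadj
        by_cases hzu : z = u
        · right; left; exact ⟨a, hva, hzu ▸ hua⟩
        · obtain ⟨r, s, hrs, hvr, hvs, hur, hus⟩ :=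
            common2 hX hXc hfree hv huX huv hva hua hdeg
          by_cases hzr : G.Adj z r
          · right; left; exact ⟨r, hvr, hzr⟩
          · by_cases hzs : G.Adj z s
            · right; left; exact ⟨s, hvs, hzs⟩
            · exact absurd (L1 hX hXc hfree huX hzX hzu hup hadj.symm hur hus hzr hzs) hrs

/-- the central vertex misses at most one vertex of the other side. -/
lemma S1 (hX : IsIS G X) (hXc : IsIS G Xᶜ) (hconn : G.Connected)
    (hfree : HFree clawSubdiv G)
    {v : V} (hv : v ∈ X) (hdeg : 3 ≤ (G.neighborFinset v).card)
    {y y' : V} (hyY : y ∈ Xᶜ) (hy'Y : y' ∈ Xᶜ)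
    (hvy : ¬ G.Adj v y) (hvy' : ¬ G.Adj v y') : y = y' := by
  rcases reach hX hXc hconn hfree hv hdeg y with rfl | ⟨a, hva, hya⟩ | h | ⟨u, a, hva, hua, huy⟩
  · exact absurd hv hyY
  · exact absurd hya (not_adj_of_mem hXc hyY (mem_compl_of_adj hX hv hva))
  · exact absurd h hvy
  rcases reach hX hXc hconn hfree hv hdeg y' with rfl | ⟨a', hva', hya'⟩ | h | ⟨u', a', hva', hu'a', hu'y'⟩
  · exact absurd hv hy'Y
  · exact absurd hya' (not_adj_of_mem hXc hy'Y (mem_compl_of_adj hX hv hva'))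
  · exact absurd h hvy'
  have huX : u ∈ X := mem_of_adj_compl hXc (mem_compl_of_adj hX hv hva) hua.symm
  have hu'X : u' ∈ X := mem_of_adj_compl hXc (mem_compl_of_adj hX hv hva') hu'a'.symm
  have huv : u ≠ v := fun h => hvy (h ▸ huy)
  have hu'v : u' ≠ v := fun h => hvy' (h ▸ hu'y')
  by_cases hu'y : G.Adj u' y
  · exact L1 hX hXc hfree hu'X hv hu'v.symm hu'a' hva' hu'y hu'y' hvy hvy'
  · have huu' : u ≠ u' := fun h => hu'y (h ▸ huy)
    obtain ⟨t, hvt, hut, hu't⟩ :=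
      common3 hX hXc hfree hv huX hu'X huv hu'v hva hua hva' hu'a' hdeg
    have htY : t ∈ Xᶜ := mem_compl_of_adj hX hv hvt
    exact (chair_apply hfree (c := t) (m := u) (e := y) (l1 := v) (l2 := u')
      hut.symm huy hvt.symm hu't.symm
      (not_adj_of_mem hXc htY hyY) (not_adj_of_mem hX huX hv) (not_adj_of_mem hX huX hu'X)
      (fun h => hvy h.symm) (fun h => hu'y h.symm) (not_adj_of_mem hX hv hu'X)
      (fun h => hvy (h ▸ hvt)) huv huu' (ne_of_sides hv hyY).symm
      (ne_of_sides hu'X hyY).symm hu'v.symm).elim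

/-- every other vertex of `X` is adjacent to each vertex missed by `v`. -/
lemma S2a (hX : IsIS G X) (hXc : IsIS G Xᶜ) (hconn : G.Connected)
    (hfree : HFree clawSubdiv G)
    {v : V} (hv : v ∈ X) (hdeg : 3 ≤ (G.neighborFinset v).card)
    {u y : V} (hu : u ∈ X) (huv : u ≠ v) (hyY : y ∈ Xᶜ)
    (hvy : ¬ G.Adj v y) : G.Adj u y := by
  by_contra huy
  obtain ⟨u₁, a₁, hva₁, hu₁a₁, hu₁y⟩ :
      ∃ u₁ a₁, G.Adj v a₁ ∧ G.Adj u₁ a₁ ∧ G.Adj u₁ y := by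
    rcases reach hX hXc hconn hfree hv hdeg y with rfl | ⟨a, hva, hya⟩ | h | h4
    · exact absurd hv hyY
    · exact absurd hya (not_adj_of_mem hXc hyY (mem_compl_of_adj hX hv hva))
    · exact absurd h hvy
    · exact h4
  obtain ⟨a, hva, hua⟩ : ∃ a, G.Adj v a ∧ G.Adj u a := by
    rcases reach hX hXc hconn hfree hv hdeg u with rfl | h2 | h | ⟨u₂, a₂, _, hu₂a₂, hu₂u⟩
    · exact absurd rfl huv
    · exact h2
    · exact absurd (mem_compl_of_adj hX hv h) (fun hc => hc hu)
    · have hu₂X : u₂ ∈ X := mem_of_adj_compl hXc (mem_compl_of_adj hX hv ‹G.Adj v a₂›) hu₂a₂.symm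
      exact absurd (mem_compl_of_adj hX hu₂X hu₂u) (fun hc => hc hu)
  have hu₁X : u₁ ∈ X := mem_of_adj_compl hXc (mem_compl_of_adj hX hv hva₁) hu₁a₁.symm
  have hu₁v : u₁ ≠ v := fun h => hvy (h ▸ hu₁y)
  have hu₁u : u₁ ≠ u := fun h => huy (h ▸ hu₁y)
  obtain ⟨t, hvt, hut, hu₁t⟩ :=
    common3 hX hXc hfree hv hu hu₁X huv hu₁v hva hua hva₁ hu₁a₁ hdeg
  have htY : t ∈ Xᶜ := mem_compl_of_adj hX hv hvt
  exact chair_apply hfree (c := t) (m := u₁) (e := y) (l1 := v) (l2 := u)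
    hu₁t.symm hu₁y hvt.symm hut.symm
    (not_adj_of_mem hXc htY hyY) (not_adj_of_mem hX hu₁X hv) (not_adj_of_mem hX hu₁X hu)
    (fun h => hvy h.symm) (fun h => huy h.symm) (not_adj_of_mem hX hv hu)
    (fun h => hvy (h ▸ hvt)) hu₁v hu₁u (ne_of_sides hv hyY).symm
    (ne_of_sides hu hyY).symm huv.symm

/-- every vertex of `X` misses at most one vertex of the other side. -/
lemma B1 (hX : IsIS G X) (hXc : IsIS G Xᶜ) (hconn : G.Connected)
    (hfree : HFree clawSubdiv G)
    {v : V} (hv : v ∈ X) (hdeg : 3 ≤ (G.neighborFinset v).card)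
    {u : V} (hu : u ∈ X) {y y' : V} (hyY : y ∈ Xᶜ) (hy'Y : y' ∈ Xᶜ)
    (h1 : ¬ G.Adj u y) (h2 : ¬ G.Adj u y') : y = y' := by
  by_cases huv : u = v
  · exact S1 hX hXc hconn hfree hv hdeg hyY hy'Y (huv ▸ h1) (huv ▸ h2)
  · by_cases hvy : G.Adj v y
    · by_cases hvy' : G.Adj v y'
      · obtain ⟨a, hva, hua⟩ : ∃ a, G.Adj v a ∧ G.Adj u a := by
          rcases reach hX hXc hconn hfree hv hdeg u with rfl | h2 | h | ⟨u₂, a₂, hva₂, hu₂a₂, hu₂u⟩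
          · exact absurd rfl huv
          · exact h2
          · exact absurd (mem_compl_of_adj hX hv h) (fun hc => hc hu)
          · have hu₂X : u₂ ∈ X := mem_of_adj_compl hXc (mem_compl_of_adj hX hv hva₂) hu₂a₂.symm
            exact absurd (mem_compl_of_adj hX hu₂X hu₂u) (fun hc => hc hu)
        exact L1 hX hXc hfree hv hu huv hva hua hvy hvy' h1 h2
      · exact absurd (S2a hX hXc hconn hfree hv hdeg hu huv hy'Y hvy') h2
    · exact absurd (S2a hX hXc hconn hfree hv hdeg hu huv hyY hvy) h1

set_option linter.unusedSectionVars false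

lemma exists_neighbor (hconn : G.Connected) {x y : V} (hne : x ≠ y) :
    ∃ z, G.Adj x z := by
  obtain ⟨p⟩ := hconn x y
  cases p with
  | nil => exact absurd rfl hne
  | cons h q => exact ⟨_, h⟩

lemma partB (hX : IsIS G X) (hXc : IsIS G Xᶜ) (hconn : G.Connected)
    (hfree : HFree clawSubdiv G)
    {v : V} (hv : v ∈ X) (hdeg : 3 ≤ (G.neighborFinset v).card) :
    IsAlmostCompleteBip G := by
  refine ⟨X, hX, hXc, ?_, ?_⟩
  · intro x hx y hy y' hy'
    exact B1 hX hXc hconn hfree hv hdeg hx hy.1 hy'.1 hy.2 hy'.2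
  · by_cases hex : ∃ y ∈ Xᶜ, 3 ≤ (G.neighborFinset y).card
    · obtain ⟨y₀, hy₀, hy₀deg⟩ := hex
      have hX' : IsIS G Xᶜᶜ := by rwa [compl_compl]
      intro y hy x1 hx1 x2 hx2
      exact B1 hXc hX' hconn hfree hy₀ hy₀deg hy
        (by simpa using hx1.1) (by simpa using hx2.1) hx1.2 hx2.2
    · push_neg at hex
      intro y hyY x1 hx1 x2 hx2
      obtain ⟨hx1X, hyx1⟩ := hx1
      obtain ⟨hx2X, hyx2⟩ := hx2
      by_contra hne
      -- each x ∈ X that misses y is adjacent to every other vertex of Xᶜ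
      have hall : ∀ x ∈ X, ¬ G.Adj y x → ∀ t, G.Adj v t → t ≠ y → G.Adj x t := by
        intro x hxX hyx t hvt hty
        by_contra hxt
        exact hty (B1 hX hXc hconn hfree hv hdeg hxX
          (mem_compl_of_adj hX hv hvt) hyY hxt (fun h => hyx h.symm))
      have hdeg3 : ∀ z ∈ Xᶜ, ∀ p q r : V, p ≠ q → p ≠ r → q ≠ r →
          G.Adj z p → G.Adj z q → G.Adj z r → False := by
        intro z hz p q r hpq hpr hqr hp hq hr
        have : ({p, q, r} : Finset V) ⊆ G.neighborFinset z := by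
          intro t ht
          simp only [Finset.mem_insert, Finset.mem_singleton] at ht
          rcases ht with rfl | rfl | rfl <;> simp [mem_neighborFinset, *]
        have h3 : ({p, q, r} : Finset V).card = 3 := by
          rw [Finset.card_insert_of_notMem (by simp [hpq, hpr]),
            Finset.card_insert_of_notMem (by simp [hqr]), Finset.card_singleton]
        have := Finset.card_le_card this
        have := hex z hz
        omega
      -- key argument when v is one of the two missed vertices
      have key : ∀ q : V, q ∈ X → ¬ G.Adj y v → ¬ G.Adj y q → v ≠ q → False := by
        intro q hqX hyp hyq hpq
        obtain ⟨w, hyw⟩ := exists_neighbor hconn (ne_of_sides hv hyY).symm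
        have hwX : w ∈ X := mem_of_adj_compl hXc hyY hyw
        have hwv : w ≠ v := fun h => hyp (h ▸ hyw)
        have hwq : w ≠ q := fun h => hyq (h ▸ hyw)
        have hcard2 : 1 < ((G.neighborFinset v).erase y).card := by
          by_cases hyN : y ∈ G.neighborFinset v
          · rw [Finset.card_erase_of_mem hyN]; omega
          · rw [Finset.erase_eq_of_notMem hyN]; omega
        obtain ⟨y₁, hy₁, y₂, hy₂, h12⟩ := Finset.one_lt_card.mp hcard2
        rw [Finset.mem_erase, mem_neighborFinset] at hy₁ hy₂
        have hfin : ∀ t, t ≠ y → G.Adj v t → G.Adj w t → False := by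
          intro t hty hpt hwt
          exact hdeg3 t (mem_compl_of_adj hX hv hpt) v q w
            hpq hwv.symm (Ne.symm hwq) hpt.symm
            ((hall q hqX hyq t hpt hty).symm) hwt.symm
        by_cases hwy₁ : G.Adj w y₁
        · exact hfin y₁ hy₁.1 hy₁.2 hwy₁
        · by_cases hwy₂ : G.Adj w y₂
          · exact hfin y₂ hy₂.1 hy₂.2 hwy₂
          · exact h12 (B1 hX hXc hconn hfree hv hdeg hwX
              (mem_compl_of_adj hX hv hy₁.2) (mem_compl_of_adj hX hv hy₂.2) hwy₁ hwy₂)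
      by_cases hv1 : v = x1
      · exact key x2 hx2X (hv1 ▸ hyx1) hyx2 (hv1 ▸ hne)
      · by_cases hv2 : v = x2
        · exact key x1 hx1X (hv2 ▸ hyx2) hyx1 (hv2 ▸ (Ne.symm hne))
        · have hcard1 : 0 < ((G.neighborFinset v).erase y).card := by
            by_cases hyN : y ∈ G.neighborFinset v
            · rw [Finset.card_erase_of_mem hyN]; omega
            · rw [Finset.erase_eq_of_notMem hyN]; omega
          obtain ⟨y₁, hy₁⟩ := Finset.card_pos.mp hcard1
          rw [Finset.mem_erase, mem_neighborFinset] at hy₁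
          exact hdeg3 y₁ (mem_compl_of_adj hX hv hy₁.2) v x1 x2 hv1 hv2 hne
            hy₁.2.symm (hall x1 hx1X hyx1 y₁ hy₁.2 hy₁.1).symm
            (hall x2 hx2X hyx2 y₁ hy₁.2 hy₁.1).symm

end PartB

section PartA

variable {V : Type*} {G : SimpleGraph V}

lemma crossing' {S : Set V} {x y : V} (w : G.Walk x y) (hx : x ∈ S) (hy : y ∉ S) :
    ∃ p q, p ∈ S ∧ q ∉ S ∧ G.Adj p q := by
  induction w with
  | nil => exact absurd hx hy
  | @cons u t _ h q ih =>
    by_cases ht : t ∈ S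
    · exact ih ht hy
    · exact ⟨u, t, hx, ht, h⟩

lemma support_getElem? {a b : V} (p : G.Walk a b) :
    ∀ i, i ≤ p.length → p.support[i]? = some (p.getVert i) := by
  induction p with
  | nil =>
    intro i hi
    simp only [Walk.length_nil, Nat.le_zero] at hi
    subst hi
    simp [Walk.support_nil, Walk.getVert_zero]
  | cons h q ih =>
    intro i hi
    cases i with
    | zero => simp [Walk.support_cons, Walk.getVert_zero]
    | succ n =>
      rw [Walk.support_cons, List.getElem?_cons_succ, Walk.getVert_cons_succ]
      exact ih n (by simpa [Walk.length_cons] using hi)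

lemma getVert_inj {a b : V} {p : G.Walk a b} (hp : p.IsPath) {i j : ℕ}
    (hi : i ≤ p.length) (hj : j ≤ p.length) (h : p.getVert i = p.getVert j) : i = j := by
  apply List.getElem?_inj (l := p.support) (by rw [Walk.length_support]; omega)
    hp.support_nodup |>.mp
  rw [support_getElem? p i hi, support_getElem? p j hj, h]

lemma exists_max_path [Fintype V] (hconn : G.Connected) :
    ∃ (a b : V) (p : G.Walk a b), p.IsPath ∧
      ∀ (c d : V) (q : G.Walk c d), q.IsPath → q.length ≤ p.length := by
  obtain ⟨v⟩ := hconn.nonempty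
  set S : Set ℕ := {n | ∃ (a b : V) (p : G.Walk a b), p.IsPath ∧ p.length = n} with hS
  have hS0 : (0 : ℕ) ∈ S := ⟨v, v, Walk.nil, Walk.IsPath.nil, rfl⟩
  have hbdd : BddAbove S := by
    refine ⟨Fintype.card V, ?_⟩
    rintro n ⟨a, b, p, hp, rfl⟩
    exact le_of_lt hp.length_lt
  have hmem := Nat.sSup_mem ⟨0, hS0⟩ hbdd
  obtain ⟨a, b, p, hp, hl⟩ := hmem
  exact ⟨a, b, p, hp, fun c d q hq => hl ▸ le_csSup hbdd ⟨c, d, q, hq, rfl⟩⟩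

lemma three_le_degree [Fintype V] [DecidableRel G.Adj] {x p q r : V}
    (hpq : p ≠ q) (hpr : p ≠ r) (hqr : q ≠ r)
    (h1 : G.Adj x p) (h2 : G.Adj x q) (h3 : G.Adj x r) :
    3 ≤ (G.neighborFinset x).card := by
  classical
  have hsub : ({p, q, r} : Finset V) ⊆ G.neighborFinset x := by
    intro t ht
    simp only [Finset.mem_insert, Finset.mem_singleton] at ht
    rcases ht with rfl | rfl | rfl <;> simpa [mem_neighborFinset]
  have h3c : ({p, q, r} : Finset V).card = 3 := by
    rw [Finset.card_insert_of_notMem (by simp [hpq, hpr]),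
      Finset.card_insert_of_notMem (by simp [hqr]), Finset.card_singleton]
  calc 3 = ({p, q, r} : Finset V).card := h3c.symm
    _ ≤ _ := Finset.card_le_card hsub

lemma path_adj_endpoint [Fintype V] [DecidableRel G.Adj]
    (hdeg : ∀ x, (G.neighborFinset x).card ≤ 2) :
    ∀ {a b : V} (p : G.Walk a b), p.IsPath → ∀ {s t : V}, s ∈ p.support →
      t ∉ p.support → G.Adj s t → s = a ∨ s = b := by
  intro a b p
  induction p with
  | nil =>
    intro hp s t hs ht hadj
    left
    simpa [Walk.support_nil] using hs
  | @cons a a' b h q ih =>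
    intro hp s t hs ht hadj
    rw [Walk.support_cons, List.mem_cons] at hs
    rcases hs with rfl | hs
    · left; rfl
    · have ht' : t ∉ q.support := fun h2 => ht (by simp [Walk.support_cons, h2])
      have hp' : q.IsPath := hp.of_cons
      rcases ih hp' hs ht' hadj with rfl | rfl
      · -- s is the start of q
        cases q with
        | nil => right; rfl
        | @cons _ a'' _ h2 q2 =>
          exfalso
          have hcons := (Walk.cons_isPath_iff h _).mp hp
          have hmem : a'' ∈ (Walk.cons h2 q2).support := by
            rw [Walk.support_cons, List.mem_cons]
            right
            exact Walk.start_mem_support q2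
          have hna : a ≠ a'' := fun he => hcons.2 (he ▸ hmem)
          have hta : t ≠ a := fun he => ht (by simp [Walk.support_cons, he])
          have hta'' : t ≠ a'' := fun he => ht' (he ▸ hmem)
          have := three_le_degree (x := s) hna (Ne.symm hta) (Ne.symm hta'') h.symm h2 hadj
          have := hdeg s
          omega
      · right; rfl

end PartA

section PartA2
variable {V : Type*} {G : SimpleGraph V}

lemma cycle_adj_char {m : ℕ} {u v : Fin (m+2)} :
    (cycleGraph (m+2)).Adj u v ↔ (u.val + 1 = v.val ∨ v.val + 1 = u.val ∨
      (u.val = 0 ∧ v.val = m+1) ∨ (v.val = 0 ∧ u.val = m+1)) := by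
  have hu := u.isLt
  have hv := v.isLt
  have key : ∀ w z : Fin (m+2), w - z = 1 ↔ w.val = (1 + z.val) % (m+2) := by
    intro w z
    rw [sub_eq_iff_eq_add, Fin.ext_iff, Fin.add_def, Fin.val_one]
  rw [cycleGraph_adj, key, key]
  constructor
  · rintro (h | h)
    · by_cases hl : v.val = m + 1
      · rw [hl, show 1 + (m+1) = m+2 by omega, Nat.mod_self] at h
        right; right; left; exact ⟨h, hl⟩
      · rw [Nat.mod_eq_of_lt (by omega)] at h
        right; left; omega
    · by_cases hl : u.val = m + 1
      · rw [hl, show 1 + (m+1) = m+2 by omega, Nat.mod_self] at h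
        right; right; right; exact ⟨h, hl⟩
      · rw [Nat.mod_eq_of_lt (by omega)] at h
        left; omega
  · rintro (h | h | ⟨h0, hm⟩ | ⟨h0, hm⟩)
    · right; rw [Nat.mod_eq_of_lt (by omega)]; omega
    · left; rw [Nat.mod_eq_of_lt (by omega)]; omega
    · left; rw [hm, show 1 + (m+1) = m+2 by omega, Nat.mod_self]; exact h0
    · right; rw [hm, show 1 + (m+1) = m+2 by omega, Nat.mod_self]; exact h0

lemma partA [Fintype V] [DecidableRel G.Adj] (hconn : G.Connected)
    (hdeg : ∀ x, (G.neighborFinset x).card ≤ 2) :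
    (∃ n, Nonempty (G ≃g pathGraph n)) ∨
      (∃ n, 3 ≤ n ∧ Nonempty (G ≃g cycleGraph n)) := by
  classical
  obtain ⟨a, b, p, hp, hmax⟩ := exists_max_path hconn
  have hsupp : ∀ x, x ∈ p.support := by
    by_contra hx
    push_neg at hx
    obtain ⟨x, hx⟩ := hx
    obtain ⟨s, t, hs, ht, hadj⟩ := crossing' (S := {z | z ∈ p.support})
      ((hconn a x).some) p.start_mem_support hx
    rcases path_adj_endpoint hdeg p hp hs ht hadj with rfl | rfl
    · have hP : (Walk.cons hadj.symm p).IsPath := hp.cons ht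
      have := hmax _ _ _ hP
      simp [Walk.length_cons] at this
    · have hP : (Walk.cons hadj.symm p.reverse).IsPath :=
        hp.reverse.cons (by simpa [Walk.support_reverse] using ht)
      have := hmax _ _ _ hP
      simp [Walk.length_cons, Walk.length_reverse] at this
  set n := p.length with hn
  set f : ℕ → V := p.getVert with hf
  have hadjsucc : ∀ i, i < n → G.Adj (f i) (f (i+1)) := fun i hi => p.adj_getVert_succ hi
  have hinj : ∀ i j, i ≤ n → j ≤ n → f i = f j → i = j := fun i j hi hj h =>
    getVert_inj hp hi hj h
  have hintern : ∀ i z, 0 < i → i < n → G.Adj (f i) z → z = f (i-1) ∨ z = f (i+1) := by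
    intro i z h0 hil hadj
    have h1 : G.Adj (f i) (f (i-1)) := by
      have h := hadjsucc (i-1) (by omega)
      rw [show i - 1 + 1 = i by omega] at h
      exact h.symm
    have h2 : G.Adj (f i) (f (i+1)) := hadjsucc i hil
    have hne : f (i-1) ≠ f (i+1) := fun h => by
      have := hinj _ _ (by omega) (by omega) h; omega
    by_contra hcon
    push_neg at hcon
    have h3 := three_le_degree (x := f i) hne (Ne.symm hcon.1) (Ne.symm hcon.2) h1 h2 hadj
    have := hdeg (f i)
    omega
  have hchar : ∀ i j, i < j → j ≤ n → G.Adj (f i) (f j) → j = i + 1 ∨ (i = 0 ∧ j = n) := by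
    intro i j hij hjn hadj
    by_cases h0 : 0 < i
    · rcases hintern i (f j) h0 (by omega) hadj with h | h
      · have := hinj j (i-1) hjn (by omega) h
        omega
      · have := hinj j (i+1) hjn (by omega) h
        omega
    · by_cases hjn' : j = n
      · right; exact ⟨by omega, hjn'⟩
      · have h0j : 0 < j := by omega
        rcases hintern j (f i) h0j (by omega) hadj.symm with h | h
        · have := hinj i (j-1) (by omega) (by omega) h
          omega
        · have := hinj i (j+1) (by omega) (by omega) h
          omega
  have hbij : Function.Bijective (fun i : Fin (n+1) => f i.val) := by
    constructor
    · intro i j h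
      have hi := Nat.lt_succ_iff.mp i.isLt
      have hj := Nat.lt_succ_iff.mp j.isLt
      exact Fin.ext (hinj i.val j.val hi hj h)
    · intro x
      obtain ⟨i, hfi, hile⟩ := Walk.mem_support_iff_exists_getVert.mp (hsupp x)
      exact ⟨⟨i, by omega⟩, hfi⟩
  clear_value n f
  by_cases hcyc : 2 ≤ n ∧ G.Adj (f 0) (f n)
  · right
    refine ⟨n + 1, by omega, ?_⟩
    obtain ⟨k, rfl⟩ : ∃ k, n = k + 2 := ⟨n - 2, by omega⟩
    refine ⟨(RelIso.mk (Equiv.ofBijective _ hbij) ?_).symm⟩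
    intro i j
    have hi := Nat.lt_succ_iff.mp i.isLt
    have hj := Nat.lt_succ_iff.mp j.isLt
    show G.Adj (f i.val) (f j.val) ↔ _
    rw [show (cycleGraph (k+2+1)).Adj i j ↔ _ from cycle_adj_char (m := k+1)]
    constructor
    · intro h
      rcases lt_trichotomy i.val j.val with hlt | heq | hgt
      · rcases hchar i.val j.val hlt hj h with h1 | ⟨h2, h3⟩
        · left; omega
        · right; right; left; exact ⟨h2, by omega⟩
      · rw [heq] at h
        exact (G.loopless.irrefl _ h).elim
      · rcases hchar j.val i.val hgt hi h.symm with h1 | ⟨h2, h3⟩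
        · right; left; omega
        · right; right; right; exact ⟨h2, by omega⟩
    · rintro (h | h | ⟨h0, hm⟩ | ⟨h0, hm⟩)
      · have := hadjsucc i.val (by omega)
        rwa [h] at this
      · have := hadjsucc j.val (by omega)
        rw [h] at this
        exact this.symm
      · rw [show (i.val : ℕ) = 0 from h0, show (j.val : ℕ) = k + 2 by omega]
        exact hcyc.2
      · rw [show (i.val : ℕ) = k + 2 by omega, show (j.val : ℕ) = 0 from h0]
        exact hcyc.2.symm
  · left
    refine ⟨n + 1, ⟨(RelIso.mk (Equiv.ofBijective _ hbij) ?_).symm⟩⟩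
    intro i j
    have hi := Nat.lt_succ_iff.mp i.isLt
    have hj := Nat.lt_succ_iff.mp j.isLt
    show G.Adj (f i.val) (f j.val) ↔ _
    rw [pathGraph_adj]
    constructor
    · intro h
      rcases lt_trichotomy i.val j.val with hlt | heq | hgt
      · rcases hchar i.val j.val hlt hj h with h1 | ⟨h2, h3⟩
        · left; omega
        · rw [h2, h3] at h
          by_cases hn2 : 2 ≤ n
          · exact (hcyc ⟨hn2, h⟩).elim
          · left; omega
      · rw [heq] at h
        exact (G.loopless.irrefl _ h).elim
      · rcases hchar j.val i.val hgt hi h.symm with h1 | ⟨h2, h3⟩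
        · right; omega
        · have h' := h.symm
          rw [h2, h3] at h'
          by_cases hn2 : 2 ≤ n
          · exact (hcyc ⟨hn2, h'⟩).elim
          · right; omega
    · rintro (h | h)
      · have := hadjsucc i.val (by omega)
        rwa [h] at this
      · have := hadjsucc j.val (by omega)
        rw [h] at this
        exact this.symm

end PartA2

theorem stmt_3 {V : Type*} [Fintype V] (G : SimpleGraph V)
    (hconn : G.Connected) (hbip : IsBip G) (hfree : HFree clawSubdiv G) :
    (∃ n : ℕ, Nonempty (G ≃g pathGraph n)) ∨
    (∃ n : ℕ, 3 ≤ n ∧ Nonempty (G ≃g cycleGraph n)) ∨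
    IsAlmostCompleteBip G := by
  classical
  obtain ⟨X, hX, hXc⟩ := hbip
  by_cases hdeg : ∀ x, (G.neighborFinset x).card ≤ 2
  · rcases partA hconn hdeg with h | h
    · exact Or.inl h
    · exact Or.inr (Or.inl h)
  · push_neg at hdeg
    obtain ⟨v, hv⟩ := hdeg
    have hv3 : 3 ≤ (G.neighborFinset v).card := hv
    right; right
    by_cases hvX : v ∈ X
    · exact partB hX hXc hconn hfree hvX hv3
    · exact partB hXc (by rwa [compl_compl]) hconn hfree (hvX : v ∈ Xᶜ) hv3
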